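/- arXiv:1504.07323 — 4 statements merged into one kernel-verified Lean document; each statement's English description precedes it below -/
import Mathlib

section
/- Let K₁, K₂, M₁, M₂ be complex Hilbert spaces and let A : K₁ → K₂, B : M₁ → K₂, C : K₁ → M₂, D : M₁ → M₂ be bounded linear operators such that the block operator V : K₁ ⊕ M₁ → K₂ ⊕ M₂ defined by V(k, m) = (A k + B m, C k + D m) is an isometry. Let Z : M₂ → M₁ be a bounded linear operator with ‖Z‖ < 1. Then 1 − D Z is an invertible element of B(M₂), and the operator F = A + B Z (1 − D Z)⁻¹ C : K₁ → K₂ satisfies the identity 1 − F* F = C* (1 − Z* D*)⁻¹ (1 − Z* Z) (1 − D Z)⁻¹ C. -/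
open ContinuousLinearMap

set_option maxHeartbeats 1000000

/-- Key algebraic identity behind Theorem 3.3(iii): if the block operator
`V(k, m) = (A k + B m, C k + D m)` from `K₁ ⊕ M₁` to `K₂ ⊕ M₂` (with ℓ²-norms on the
direct sums) is an isometry, and `‖Z‖ < 1`, then `1 - D Z` is invertible and
`F = A + B Z (1 - D Z)⁻¹ C` satisfies
`1 - F* F = C* (1 - Z* D*)⁻¹ (1 - Z* Z) (1 - D Z)⁻¹ C`. -/
theorem stmt_0 {K₁ K₂ M₁ M₂ : Type*}
    [NormedAddCommGroup K₁] [InnerProductSpace ℂ K₁] [CompleteSpace K₁]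
    [NormedAddCommGroup K₂] [InnerProductSpace ℂ K₂] [CompleteSpace K₂]
    [NormedAddCommGroup M₁] [InnerProductSpace ℂ M₁] [CompleteSpace M₁]
    [NormedAddCommGroup M₂] [InnerProductSpace ℂ M₂] [CompleteSpace M₂]
    (A : K₁ →L[ℂ] K₂) (B : M₁ →L[ℂ] K₂) (C : K₁ →L[ℂ] M₂) (D : M₁ →L[ℂ] M₂)
    (hV : ∀ (k : K₁) (m : M₁),
      ‖A k + B m‖ ^ 2 + ‖C k + D m‖ ^ 2 = ‖k‖ ^ 2 + ‖m‖ ^ 2)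
    (Z : M₂ →L[ℂ] M₁) (hZ : ‖Z‖ < 1) :
    IsUnit (1 - D ∘L Z) ∧
    ∀ F : K₁ →L[ℂ] K₂,
      F = A + B ∘L Z ∘L Ring.inverse (1 - D ∘L Z) ∘L C →
      1 - adjoint F ∘L F =
        adjoint C ∘L Ring.inverse (1 - adjoint Z ∘L adjoint D) ∘L
          (1 - adjoint Z ∘L Z) ∘L Ring.inverse (1 - D ∘L Z) ∘L C := by
  have hCk : ∀ k : K₁, ‖A k‖ ^ 2 + ‖C k‖ ^ 2 = ‖k‖ ^ 2 := by
    intro k; simpa using hV k 0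
  have hDm : ∀ m : M₁, ‖B m‖ ^ 2 + ‖D m‖ ^ 2 = ‖m‖ ^ 2 := by
    intro m; simpa using hV 0 m
  -- column identities
  have hAA : adjoint A ∘L A + adjoint C ∘L C = (1 : K₁ →L[ℂ] K₁) := by
    have h0 : ∀ k : K₁,
        (inner ℂ (((adjoint A ∘L A + adjoint C ∘L C - 1 : K₁ →L[ℂ] K₁) : K₁ →ₗ[ℂ] K₁) k) k : ℂ) = 0 := by
      intro k
      simp only [ContinuousLinearMap.coe_coe, ContinuousLinearMap.sub_apply,
        ContinuousLinearMap.add_apply, ContinuousLinearMap.comp_apply,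
        ContinuousLinearMap.one_apply, inner_sub_left, inner_add_left,
        adjoint_inner_left, inner_self_eq_norm_sq_to_K]
      rw [sub_eq_zero]
      exact_mod_cast hCk k
    have hT := (inner_map_self_eq_zero _).mp h0
    have h1 : (adjoint A ∘L A + adjoint C ∘L C - 1 : K₁ →L[ℂ] K₁) = 0 :=
      ContinuousLinearMap.coe_injective (by simpa using hT)
    linear_combination (norm := abel) h1
  have hBB : adjoint B ∘L B + adjoint D ∘L D = (1 : M₁ →L[ℂ] M₁) := by
    have h0 : ∀ m : M₁,
        (inner ℂ (((adjoint B ∘L B + adjoint D ∘L D - 1 : M₁ →L[ℂ] M₁) : M₁ →ₗ[ℂ] M₁) m) m : ℂ) = 0 := by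
      intro m
      simp only [ContinuousLinearMap.coe_coe, ContinuousLinearMap.sub_apply,
        ContinuousLinearMap.add_apply, ContinuousLinearMap.comp_apply,
        ContinuousLinearMap.one_apply, inner_sub_left, inner_add_left,
        adjoint_inner_left, inner_self_eq_norm_sq_to_K]
      rw [sub_eq_zero]
      exact_mod_cast hDm m
    have hT := (inner_map_self_eq_zero _).mp h0
    have h1 : (adjoint B ∘L B + adjoint D ∘L D - 1 : M₁ →L[ℂ] M₁) = 0 :=
      ContinuousLinearMap.coe_injective (by simpa using hT)
    linear_combination (norm := abel) h1
  -- cross identity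
  have hre : ∀ (k : K₁) (m : M₁),
      ((inner ℂ (A k) (B m) : ℂ) + (inner ℂ (C k) (D m) : ℂ)).re = 0 := by
    intro k m
    have h := hV k m
    rw [@norm_add_sq ℂ, @norm_add_sq ℂ] at h
    have h1 := hCk k
    have h2 := hDm m
    simp only [RCLike.re_to_complex] at h
    rw [Complex.add_re]
    linarith
  have hS : ∀ (k : K₁) (m : M₁),
      (inner ℂ (A k) (B m) : ℂ) + (inner ℂ (C k) (D m) : ℂ) = 0 := by
    intro k m
    have h1 := hre k m
    have h2 := hre ((Complex.I : ℂ) • k) m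
    rw [map_smul, map_smul, inner_smul_left, inner_smul_left, ← mul_add] at h2
    apply Complex.ext
    · simpa using h1
    · simpa [Complex.mul_re] using h2
  have hAB : adjoint A ∘L B + adjoint C ∘L D = 0 := by
    ext m
    have hz : ∀ k : K₁, (inner ℂ k ((adjoint A ∘L B + adjoint C ∘L D) m) : ℂ) = 0 := by
      intro k
      simp only [ContinuousLinearMap.add_apply, ContinuousLinearMap.comp_apply,
        inner_add_right, adjoint_inner_right]
      exact hS k m
    have := hz ((adjoint A ∘L B + adjoint C ∘L D) m)
    simpa [inner_self_eq_zero] using this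
  have hS' : ∀ (k : K₁) (m : M₁),
      (inner ℂ (B m) (A k) : ℂ) + (inner ℂ (D m) (C k) : ℂ) = 0 := by
    intro k m
    have h := congrArg (starRingEnd ℂ) (hS k m)
    simpa [inner_conj_symm] using h
  have hBA : adjoint B ∘L A + adjoint D ∘L C = 0 := by
    ext k
    have hz : ∀ m : M₁, (inner ℂ m ((adjoint B ∘L A + adjoint D ∘L C) k) : ℂ) = 0 := by
      intro m
      simp only [ContinuousLinearMap.add_apply, ContinuousLinearMap.comp_apply,
        inner_add_right, adjoint_inner_right]
      exact hS' k m
    have := hz ((adjoint B ∘L A + adjoint D ∘L C) k)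
    simpa [inner_self_eq_zero] using this
  -- invertibility
  have hD1 : ‖D‖ ≤ 1 := by
    refine opNorm_le_bound D zero_le_one fun m => ?_
    rw [one_mul]
    nlinarith [hDm m, norm_nonneg (D m), norm_nonneg m, sq_nonneg (‖B m‖)]
  have hDZ : ‖D ∘L Z‖ < 1 := by
    refine lt_of_le_of_lt (opNorm_comp_le D Z) ?_
    nlinarith [norm_nonneg Z, opNorm_nonneg D]
  have hu : IsUnit (1 - D ∘L Z) := isUnit_one_sub_of_norm_lt_one hDZ
  refine ⟨hu, ?_⟩
  intro F hF
  subst hF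
  set w : M₂ →L[ℂ] M₂ := Ring.inverse (1 - D ∘L Z) with hwdef
  have hus : (1 - adjoint Z ∘L adjoint D : M₂ →L[ℂ] M₂) = star (1 - D ∘L Z) := by
    rw [star_sub, star_one, star_eq_adjoint, adjoint_comp]
  have hw' : Ring.inverse (1 - adjoint Z ∘L adjoint D : M₂ →L[ℂ] M₂) = adjoint w := by
    rw [hus, Ring.inverse_star, ← star_eq_adjoint, hwdef]
  -- ring facts
  have e2 : (1 - D ∘L Z) * w = 1 := Ring.mul_inverse_cancel _ hu
  have e1 : adjoint w * (1 - adjoint Z ∘L adjoint D) = 1 := by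
    have h := congrArg star e2
    rw [star_mul, star_one, star_sub, star_one, star_eq_adjoint, star_eq_adjoint,
      adjoint_comp] at h
    exact h
  have key : adjoint w * w
      = 1 + (D ∘L Z) * w + adjoint w * (adjoint Z ∘L adjoint D)
        + adjoint w * ((adjoint Z ∘L adjoint D) * ((D ∘L Z) * w)) := by
    have expand : adjoint w * w
        = (adjoint w * (1 - adjoint Z ∘L adjoint D)) * ((1 - D ∘L Z) * w)
          + (adjoint w * (1 - adjoint Z ∘L adjoint D)) * ((D ∘L Z) * w)
          + (adjoint w * (adjoint Z ∘L adjoint D)) * ((1 - D ∘L Z) * w)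
          + (adjoint w * (adjoint Z ∘L adjoint D)) * ((D ∘L Z) * w) := by
      noncomm_ring
    rw [expand, e1, e2]
    noncomm_ring
  have keyC : adjoint w ∘L (w ∘L C)
      = C + D ∘L (Z ∘L (w ∘L C)) + adjoint w ∘L (adjoint Z ∘L (adjoint D ∘L C))
        + adjoint w ∘L (adjoint Z ∘L (adjoint D ∘L (D ∘L (Z ∘L (w ∘L C))))) := by
    have h := congrArg (fun X : M₂ →L[ℂ] M₂ => X ∘L C) key
    simpa only [ContinuousLinearMap.mul_def, add_comp, one_def, id_comp, comp_assoc] using h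
  -- rewriting lemmas
  have rAA : adjoint A ∘L A = 1 - adjoint C ∘L C := by
    linear_combination (norm := abel) hAA
  have rBA : adjoint B ∘L A = -(adjoint D ∘L C) := by
    linear_combination (norm := abel) hBA
  have rAB : adjoint A ∘L B = -(adjoint C ∘L D) := by
    linear_combination (norm := abel) hAB
  have rBB : adjoint B ∘L B = 1 - adjoint D ∘L D := by
    linear_combination (norm := abel) hBB
  have rABc : ∀ X : K₁ →L[ℂ] M₁,
      adjoint A ∘L (B ∘L X) = -(adjoint C ∘L (D ∘L X)) := by
    intro X
    rw [← comp_assoc, rAB, neg_comp, comp_assoc]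
  have rBBc : ∀ X : K₁ →L[ℂ] M₁,
      adjoint B ∘L (B ∘L X) = X - adjoint D ∘L (D ∘L X) := by
    intro X
    rw [← comp_assoc, rBB, sub_comp, one_def, id_comp, comp_assoc]
  rw [hw']
  -- expand everything
  simp only [map_add, adjoint_comp, adjoint_adjoint]
  simp only [add_comp, comp_add, comp_assoc, sub_comp, comp_sub, one_def, id_comp, comp_id]
  rw [rAA, rBA, rABc, rBBc]
  simp only [comp_sub, comp_neg, comp_add, sub_comp, neg_comp, comp_assoc]
  rw [keyC]
  simp only [comp_add, one_def]
  abel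
end

section
/- Let K₁, K₂, M₁, M₂ be complex Hilbert spaces and let A : K₁ → K₂, B : M₁ → K₂, C : K₁ → M₂, D : M₁ → M₂ be bounded linear operators such that the block operator V : K₁ ⊕ M₁ → K₂ ⊕ M₂ defined by V(k, m) = (A k + B m, C k + D m) is an isometry. Let Z : M₂ → M₁ be a bounded linear operator with ‖Z‖ < 1. Then 1 − D Z is invertible in B(M₂) and the operator F = A + B Z (1 − D Z)⁻¹ C : K₁ → K₂ satisfies ‖F‖ ≤ 1. -/
open ContinuousLinearMap

/-- Theorem 3.3(iii) (contractivity): if the block operator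
`V(k, m) = (A k + B m, C k + D m)` from `K₁ ⊕ M₁` to `K₂ ⊕ M₂` (with ℓ²-norms on the
direct sums) is an isometry, and `‖Z‖ < 1`, then `1 - D Z` is invertible and
`F = A + B Z (1 - D Z)⁻¹ C` satisfies `‖F‖ ≤ 1`. -/
theorem stmt_1 {K₁ K₂ M₁ M₂ : Type*}
    [NormedAddCommGroup K₁] [InnerProductSpace ℂ K₁] [CompleteSpace K₁]
    [NormedAddCommGroup K₂] [InnerProductSpace ℂ K₂] [CompleteSpace K₂]
    [NormedAddCommGroup M₁] [InnerProductSpace ℂ M₁] [CompleteSpace M₁]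
    [NormedAddCommGroup M₂] [InnerProductSpace ℂ M₂] [CompleteSpace M₂]
    (A : K₁ →L[ℂ] K₂) (B : M₁ →L[ℂ] K₂) (C : K₁ →L[ℂ] M₂) (D : M₁ →L[ℂ] M₂)
    (hV : ∀ (k : K₁) (m : M₁),
      ‖A k + B m‖ ^ 2 + ‖C k + D m‖ ^ 2 = ‖k‖ ^ 2 + ‖m‖ ^ 2)
    (Z : M₂ →L[ℂ] M₁) (hZ : ‖Z‖ < 1) :
    IsUnit (1 - D ∘L Z) ∧
      ‖A + B ∘L Z ∘L Ring.inverse (1 - D ∘L Z) ∘L C‖ ≤ 1 := by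
  -- ‖D‖ ≤ 1
  have hD : ‖D‖ ≤ 1 := by
    refine opNorm_le_bound D zero_le_one fun m => ?_
    have h := hV 0 m
    simp only [map_zero, zero_add, norm_zero] at h
    nlinarith [norm_nonneg (D m), norm_nonneg m, norm_nonneg (B m), sq_nonneg (‖B m‖)]
  have hDZ : ‖D ∘L Z‖ < 1 :=
    lt_of_le_of_lt (opNorm_comp_le D Z) (by nlinarith [norm_nonneg Z, norm_nonneg D])
  have hU : IsUnit (1 - D ∘L Z) := (Units.oneSub _ hDZ).isUnit
  refine ⟨hU, ?_⟩
  refine opNorm_le_bound _ zero_le_one fun k => ?_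
  set x : M₂ := Ring.inverse (1 - D ∘L Z) (C k) with hxdef
  set m : M₁ := Z x with hmdef
  have hinv : (1 - D ∘L Z) ∘L Ring.inverse (1 - D ∘L Z) = 1 := Ring.mul_inverse_cancel _ hU
  have hCk : C k + D m = x := by
    have h1 : ((1 - D ∘L Z) ∘L Ring.inverse (1 - D ∘L Z)) (C k) = C k := by
      rw [hinv, ContinuousLinearMap.one_apply]
    have h2 : ((1 - D ∘L Z) ∘L Ring.inverse (1 - D ∘L Z)) (C k) = x - D m := rfl
    rw [h2] at h1
    rw [← h1]
    abel
  have hFk : (A + B ∘L Z ∘L Ring.inverse (1 - D ∘L Z) ∘L C) k = A k + B m := by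
    rfl
  have h := hV k m
  rw [hCk] at h
  have hZx : ‖Z x‖ ≤ ‖x‖ := by
    calc ‖Z x‖ ≤ ‖Z‖ * ‖x‖ := Z.le_opNorm x
    _ ≤ 1 * ‖x‖ := by nlinarith [norm_nonneg x]
    _ = ‖x‖ := one_mul _
  rw [hFk]
  have hm : ‖m‖ ≤ ‖x‖ := hZx
  rw [one_mul]
  nlinarith [norm_nonneg (A k + B m), norm_nonneg k, norm_nonneg m, norm_nonneg x]
end

section
/- Let E₁, E₂, F₁, F₂ be complex Banach spaces and let A : E₁ → E₂, B : F₁ → E₂, C : E₁ → F₂, D : F₁ → F₂, Z : F₂ → F₁ be bounded linear operators with ‖D Z‖ < 1. For every integer k ≥ 1, the Bochner integral (1/2π) ∫₀^{2π} e^{−i k θ} ( A + B (e^{i θ} Z) (1 − D (e^{i θ} Z))⁻¹ C ) dθ, taken in the Banach space B(E₁, E₂), equals B Z (D Z)^{k−1} C. -/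
open ContinuousLinearMap

private lemma key_scalar_int (m : ℤ) :
    ∫ θ in (0:ℝ)..(2*Real.pi), Complex.exp ((m:ℂ)*(θ:ℂ)*Complex.I) =
      if m = 0 then (((2*Real.pi : ℝ)):ℂ) else 0 := by
  rcases eq_or_ne m 0 with h | h
  · simp [h, Complex.real_smul]
  · rw [if_neg h]
    have hc : (m:ℂ)*Complex.I ≠ 0 := by
      simp [Complex.I_ne_zero, Complex.ext_iff, h]
    have hrw : ∀ θ : ℝ, (m:ℂ)*(θ:ℂ)*Complex.I = ((m:ℂ)*Complex.I)*(θ:ℂ) := by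
      intro θ; ring
    simp_rw [hrw]
    rw [integral_exp_mul_complex hc]
    have h1 : ((m:ℂ)*Complex.I) * ((2*Real.pi : ℝ):ℂ) = (m:ℂ) * (2*(Real.pi:ℂ)*Complex.I) := by
      push_cast; ring
    rw [h1, Complex.exp_int_mul_two_pi_mul_I]
    simp

private lemma norm_exp_real_mul_I' (z : ℂ) (hz : z.re = 0) : ‖Complex.exp z‖ = 1 := by
  rw [Complex.norm_exp, hz, Real.exp_zero]

set_option maxHeartbeats 1000000 in
set_option synthInstance.maxHeartbeats 200000 in
/-- Fourier-coefficient extraction (eq. (3.21)) used in the proof of Theorem 3.3: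
for `‖D Z‖ < 1` and `k ≥ 1`,
`(1/2π) ∫₀^{2π} e^{-ikθ} (A + B (e^{iθ} Z)(1 - D (e^{iθ} Z))⁻¹ C) dθ = B Z (D Z)^{k-1} C`,
the integral being a Bochner (interval) integral valued in `B(E₁, E₂)`. -/
theorem stmt_4 {E₁ E₂ F₁ F₂ : Type*}
    [NormedAddCommGroup E₁] [NormedSpace ℂ E₁] [CompleteSpace E₁]
    [NormedAddCommGroup E₂] [NormedSpace ℂ E₂] [CompleteSpace E₂]
    [NormedAddCommGroup F₁] [NormedSpace ℂ F₁] [CompleteSpace F₁]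
    [NormedAddCommGroup F₂] [NormedSpace ℂ F₂] [CompleteSpace F₂]
    (A : E₁ →L[ℂ] E₂) (B : F₁ →L[ℂ] E₂) (C : E₁ →L[ℂ] F₂) (D : F₁ →L[ℂ] F₂)
    (Z : F₂ →L[ℂ] F₁) (hDZ : ‖D ∘L Z‖ < 1) (k : ℕ) (hk : 1 ≤ k) :
    (1 / (2 * Real.pi)) •
        ∫ θ in (0 : ℝ)..(2 * Real.pi),
          Complex.exp (-((k : ℂ) * (θ : ℂ)) * Complex.I) •
            (A + B ∘L (Complex.exp ((θ : ℂ) * Complex.I) • Z) ∘L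
              Ring.inverse (1 - D ∘L (Complex.exp ((θ : ℂ) * Complex.I) • Z)) ∘L C) =
      B ∘L Z ∘L ((D ∘L Z) ^ (k - 1)) ∘L C := by
  set T : F₂ →L[ℂ] F₂ := D ∘L Z with hT
  set S : ℕ → (E₁ →L[ℂ] E₂) := fun n => B ∘L Z ∘L (T ^ n) ∘L C with hS
  set f : ℝ → (E₁ →L[ℂ] E₂) := fun θ =>
    Complex.exp (-((k : ℂ) * (θ : ℂ)) * Complex.I) •
      (A + B ∘L (Complex.exp ((θ : ℂ) * Complex.I) • Z) ∘L
        Ring.inverse (1 - D ∘L (Complex.exp ((θ : ℂ) * Complex.I) • Z)) ∘L C) with hf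
  set G : ℕ → (E₁ →L[ℂ] E₂) := fun n => if n = 0 then A else S (n - 1) with hG
  set F : ℕ → ℝ → (E₁ →L[ℂ] E₂) := fun n θ =>
    Complex.exp (((((n:ℤ) - (k:ℤ)) : ℤ) : ℂ) * (θ:ℂ) * Complex.I) • G n with hFdef
  -- pointwise HasSum
  have hptwise : ∀ θ : ℝ, HasSum (fun n => F n θ) (f θ) := by
    intro θ
    set e : ℂ := Complex.exp ((θ : ℂ) * Complex.I) with he
    have habs : ‖e‖ = 1 := norm_exp_real_mul_I' _ (by simp)
    have h1 : ‖e • T‖ < 1 := by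
      rw [norm_smul e T, habs, one_mul]; exact hDZ
    have hg : HasSum (fun n : ℕ => (e • T) ^ n) (Ring.inverse (1 - e • T)) :=
      hasSum_geom_series_inverse _ h1
    let L : (F₂ →L[ℂ] F₂) →L[ℂ] (E₁ →L[ℂ] E₂) :=
      ((compL ℂ E₁ F₂ E₂) (B ∘L (e • Z))).comp (((compL ℂ E₁ F₂ F₂).flip) C)
    have hg3 : HasSum
        (fun n : ℕ => Complex.exp (-((k : ℂ) * (θ : ℂ)) * Complex.I) • L ((e • T) ^ n))
        (Complex.exp (-((k : ℂ) * (θ : ℂ)) * Complex.I) • L (Ring.inverse (1 - e • T))) :=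
      (hg.mapL L).const_smul _
    have hLval : ∀ X : F₂ →L[ℂ] F₂, L X = (B ∘L (e • Z)) ∘L X ∘L C := fun X => rfl
    have hterm : ∀ n : ℕ,
        F (n + 1) θ = Complex.exp (-((k : ℂ) * (θ : ℂ)) * Complex.I) • L ((e • T) ^ n) := by
      intro n
      have hB : B ∘L (e • Z) = e • (B ∘L Z) := ContinuousLinearMap.comp_smul B e Z
      rw [hLval, smul_pow,
        ContinuousLinearMap.smul_comp (e ^ n) (T ^ n) C,
        ContinuousLinearMap.comp_smul (B ∘L (e • Z)) (e ^ n) ((T ^ n) ∘L C),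
        hB, ContinuousLinearMap.smul_comp e (B ∘L Z) ((T ^ n) ∘L C),
        smul_smul, smul_smul]
      have hGn : G (n + 1) = S n := by
        rw [hG]; simp
      simp only [hFdef]
      rw [hGn]
      congr 1
      · rw [he, ← Complex.exp_nat_mul, ← Complex.exp_add, ← Complex.exp_add]
        congr 1
        push_cast; ring
    have hshift : HasSum (fun n => F (n + 1) θ)
        (Complex.exp (-((k : ℂ) * (θ : ℂ)) * Complex.I) • L (Ring.inverse (1 - e • T))) := by
      have : (fun n => F (n + 1) θ) =
          fun n => Complex.exp (-((k : ℂ) * (θ : ℂ)) * Complex.I) • L ((e • T) ^ n) :=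
        funext hterm
      rw [this]; exact hg3
    have hfull := (hasSum_nat_add_iff (f := fun n => F n θ) 1).mp hshift
    simp only [Finset.range_one, Finset.sum_singleton] at hfull
    convert hfull using 1
    case e'_3 => rfl
    have hDZe : D ∘L (e • Z) = e • T := ContinuousLinearMap.comp_smul D e Z
    rw [hf]
    simp only [hDZe, smul_add]
    rw [hLval]
    have hG0 : G 0 = A := by rw [hG]; simp
    have hF0 : F 0 θ = Complex.exp (-((k : ℂ) * (θ : ℂ)) * Complex.I) • A := by
      simp only [hFdef]
      rw [hG0]
      congr 2
      push_cast; ring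
    rw [hF0, add_comm]
    simp only [he, hT, ContinuousLinearMap.comp_smul, ContinuousLinearMap.smul_comp, ContinuousLinearMap.comp_assoc]
  -- norms and bound
  have hTnn : (0:ℝ) ≤ ‖T‖ := norm_nonneg _
  have hexpnorm : ∀ (m : ℤ) (θ : ℝ),
      ‖Complex.exp ((m:ℂ) * (θ:ℂ) * Complex.I)‖ = 1 := by
    intro m θ
    exact norm_exp_real_mul_I' _ (by simp)
  have hnormF : ∀ n θ, ‖F n θ‖ = ‖G n‖ := by
    intro n θ
    rw [hFdef]
    show ‖Complex.exp (((((n:ℤ) - (k:ℤ)) : ℤ) : ℂ) * (θ:ℂ) * Complex.I) • G n‖ = ‖G n‖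
    rw [norm_smul _ (G n), hexpnorm, one_mul]
  have hpowle : ∀ m : ℕ, ‖T ^ m‖ ≤ ‖T‖ ^ m := by
    intro m
    induction m with
    | zero => simpa [ContinuousLinearMap.one_def] using ContinuousLinearMap.norm_id_le (E := F₂)
    | succ p ih =>
        calc ‖T ^ (p+1)‖ = ‖T ^ p * T‖ := by rw [pow_succ]
          _ ≤ ‖T ^ p‖ * ‖T‖ := norm_mul_le _ _
          _ ≤ ‖T‖ ^ p * ‖T‖ := by gcongr
          _ = ‖T‖ ^ (p+1) := by rw [pow_succ]
  have hSle : ∀ m : ℕ, ‖S m‖ ≤ ‖B‖ * ‖Z‖ * ‖T‖ ^ m * ‖C‖ := by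
    intro m
    rw [hS]
    calc ‖B ∘L Z ∘L (T ^ m) ∘L C‖ ≤ ‖B‖ * ‖Z ∘L (T ^ m) ∘L C‖ := opNorm_comp_le _ _
      _ ≤ ‖B‖ * (‖Z‖ * ‖(T ^ m) ∘L C‖) :=
          mul_le_mul_of_nonneg_left (opNorm_comp_le _ _) (norm_nonneg _)
      _ ≤ ‖B‖ * (‖Z‖ * (‖T ^ m‖ * ‖C‖)) :=
          mul_le_mul_of_nonneg_left
            (mul_le_mul_of_nonneg_left (opNorm_comp_le _ _) (norm_nonneg _)) (norm_nonneg _)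
      _ ≤ ‖B‖ * (‖Z‖ * (‖T‖ ^ m * ‖C‖)) := by
          apply mul_le_mul_of_nonneg_left _ (norm_nonneg _)
          apply mul_le_mul_of_nonneg_left _ (norm_nonneg _)
          exact mul_le_mul_of_nonneg_right (hpowle m) (norm_nonneg _)
      _ = ‖B‖ * ‖Z‖ * ‖T‖ ^ m * ‖C‖ := by ring
  have hsummable : Summable (fun n => ‖G n‖) := by
    have h1 : Summable (fun m : ℕ => ‖B‖ * ‖Z‖ * ‖T‖ ^ m * ‖C‖) := by
      have := summable_geometric_of_lt_one hTnn hDZ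
      simpa [mul_comm, mul_assoc, mul_left_comm] using (this.mul_left (‖B‖ * ‖Z‖)).mul_right ‖C‖
    have h2 : Summable (fun m : ℕ => ‖G (m + 1)‖) := by
      apply h1.of_nonneg_of_le (fun m => norm_nonneg _)
      intro m
      have hg1 : G (m + 1) = S m := by rw [hG]; simp
      rw [hg1]; exact hSle m
    exact (summable_nat_add_iff 1).mp h2
  -- continuity
  have hFcont : ∀ n, Continuous (F n) := by
    intro n
    simp only [hFdef]
    refine Continuous.smul (?_ : Continuous fun θ : ℝ => Complex.exp (((((n:ℤ) - (k:ℤ)) : ℤ) : ℂ) * (θ:ℂ) * Complex.I)) (continuous_const : Continuous fun _ : ℝ => G n)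
    apply Complex.continuous_exp.comp
    exact ((continuous_const.mul Complex.continuous_ofReal).mul continuous_const)
  -- dominated convergence
  have hDCT : HasSum (fun n => ∫ θ in (0:ℝ)..(2*Real.pi), F n θ)
      (∫ θ in (0:ℝ)..(2*Real.pi), f θ) := by
    apply intervalIntegral.hasSum_integral_of_dominated_convergence (fun n _ => ‖G n‖)
    · intro n; exact (hFcont n).aestronglyMeasurable
    · intro n; filter_upwards with t _
      exact le_of_eq (hnormF n t)
    · filter_upwards with t _
      exact hsummable
    · exact intervalIntegrable_const
    · filter_upwards with t _ using hptwise t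
  -- compute the integrals
  have hint : ∀ n, (∫ θ in (0:ℝ)..(2*Real.pi), F n θ) =
      if n = k then (((2*Real.pi : ℝ)):ℂ) • S (k - 1) else 0 := by
    intro n
    rw [hFdef]
    show (∫ θ in (0:ℝ)..(2*Real.pi),
        Complex.exp (((((n:ℤ) - (k:ℤ)) : ℤ) : ℂ) * (θ:ℂ) * Complex.I) • G n) = _
    rw [intervalIntegral.integral_smul_const, key_scalar_int]
    by_cases hnk : n = k
    · have h1 : ((n:ℤ) - (k:ℤ) : ℤ) = 0 := by omega
      have h2 : G n = S (k - 1) := by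
        rw [hG, hnk]
        have : k ≠ 0 := by omega
        simp [this]
      rw [if_pos h1, if_pos hnk, h2]
    · have h1 : ((n:ℤ) - (k:ℤ) : ℤ) ≠ 0 := by omega
      rw [if_neg h1, if_neg hnk, zero_smul]
  -- conclude
  have hite : HasSum (fun n => ∫ θ in (0:ℝ)..(2*Real.pi), F n θ)
      ((((2*Real.pi : ℝ)):ℂ) • S (k - 1)) := by
    have : (fun n => ∫ θ in (0:ℝ)..(2*Real.pi), F n θ)
        = (fun n => if n = k then (((2*Real.pi : ℝ)):ℂ) • S (k - 1) else 0) := funext hint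
    rw [this]
    exact hasSum_ite_eq k _
  have hival : (∫ θ in (0:ℝ)..(2*Real.pi), f θ) = (((2*Real.pi : ℝ)):ℂ) • S (k - 1) :=
    hDCT.unique hite
  rw [hival]
  have hcs : ((((2*Real.pi : ℝ)):ℂ)) • S (k-1) = (2*Real.pi : ℝ) • S (k-1) := by
    have h : (((2*Real.pi : ℝ)):ℂ) = (2*Real.pi : ℝ) • (1 : ℂ) := by
      rw [Complex.real_smul, mul_one]
    rw [h, smul_assoc, one_smul]
  rw [hcs, smul_smul]
  have hpi : (1 / (2 * Real.pi)) * (2 * Real.pi) = 1 := by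
    field_simp
  rw [hpi, one_smul]
end

section
/- For every n ≥ 1 and all n×n complex matrices A and B, the operator norm (from ℓ²_n) of A B − B A − 1 is at least 1, where 1 is the n×n identity matrix. -/
open Polynomial in
lemma mem_spectrum_iff_isRoot_charpoly {n : ℕ} (M : Matrix (Fin n) (Fin n) ℂ) (μ : ℂ) :
    μ ∈ spectrum ℂ M ↔ M.charpoly.IsRoot μ := by
  rw [spectrum.mem_iff, Matrix.isUnit_iff_isUnit_det, isUnit_iff_ne_zero, not_ne_iff]
  have : M.charpoly.eval μ = ((algebraMap ℂ (Matrix (Fin n) (Fin n) ℂ)) μ - M).det := by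
    rw [Matrix.charpoly, ← Polynomial.coe_evalRingHom, RingHom.map_det]
    congr 1
    ext i j
    by_cases h : i = j <;>
      simp [h, Matrix.charmatrix, Matrix.algebraMap_matrix_apply, Matrix.diagonal]
  rw [Polynomial.IsRoot, this]

set_option synthInstance.maxHeartbeats 400000 in
/-- Key computation of Example 8.4: for all `n × n` complex matrices `A` and `B`, the
operator norm (from `ℓ²ₙ`) of `A B - B A - 1` is at least `1`. -/
theorem stmt_10 (n : ℕ) (hn : 1 ≤ n) (A B : Matrix (Fin n) (Fin n) ℂ) :
    1 ≤ ‖Matrix.toEuclideanCLM (𝕜 := ℂ) (n := Fin n) (A * B - B * A - 1)‖ := by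
  set M := A * B - B * A - 1 with hM
  have htr : M.trace = -(n : ℂ) := by
    simp [hM, Matrix.trace_sub, Matrix.trace_mul_comm A B]
  have hsum : M.charpoly.roots.sum = -(n : ℂ) := by
    rw [← Matrix.trace_eq_sum_roots_charpoly]; exact htr
  have hcard : M.charpoly.roots.card = n := by
    rw [(Polynomial.splits_iff_card_roots).mp (IsAlgClosed.splits _),
      Matrix.charpoly_natDegree_eq_dim, Fintype.card_fin]
  have hex : ∃ μ ∈ M.charpoly.roots, 1 ≤ ‖μ‖ := by
    by_contra h
    push_neg at h
    have h1 : ‖M.charpoly.roots.sum‖ ≤ (M.charpoly.roots.map norm).sum :=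
      norm_multiset_sum_le _
    have h2 : (M.charpoly.roots.map norm).sum < (M.charpoly.roots.map (fun _ => (1:ℝ))).sum := by
      apply Multiset.sum_lt_sum_of_nonempty
      · intro hne
        rw [hne] at hcard
        simp at hcard
        omega
      · exact h
    have h3 : (M.charpoly.roots.map (fun _ => (1:ℝ))).sum = n := by
      rw [Multiset.map_const', Multiset.sum_replicate, hcard]
      simp
    rw [hsum] at h1
    rw [norm_neg] at h1
    simp only [Complex.norm_natCast] at h1
    linarith
  obtain ⟨μ, hμr, hμ⟩ := hex
  haveI : Nonempty (Fin n) := ⟨⟨0, hn⟩⟩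
  have hspec : μ ∈ spectrum ℂ (Matrix.toEuclideanCLM (𝕜 := ℂ) (n := Fin n) M) := by
    rw [AlgEquiv.spectrum_eq (Matrix.toEuclideanCLM (𝕜 := ℂ) (n := Fin n)),
      mem_spectrum_iff_isRoot_charpoly]
    exact Polynomial.isRoot_of_mem_roots hμr
  calc (1:ℝ) ≤ ‖μ‖ := hμ
    _ ≤ _ := spectrum.norm_le_norm_of_mem hspec
end
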